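/- Let 𝔽 be a field, X, Y, Z finite sets, α a corelation from X to Y, and β a corelation from Y to Z. Then for all i_X : X → 𝔽 and i_Z : Z → 𝔽, the following are equivalent: (1) for every equivalence class C of the composite corelation β∘α, ∑_{x ∈ C∩X} i_X(x) = ∑_{z ∈ C∩Z} i_Z(z); (2) there exists i_Y : Y → 𝔽 such that for every equivalence class A of α, ∑_{x ∈ A∩X} i_X(x) = ∑_{y ∈ A∩Y} i_Y(y), and for every equivalence class B of β, ∑_{y ∈ B∩Y} i_Y(y) = ∑_{z ∈ B∩Z} i_Z(z). (This is the compositionality of the current functor I: I(β∘α) = I(β)∘I(α) as linear relations.) -/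

import Mathlib

open Finset

open scoped Classical

section Helpers

variable {F : Type*} [Field F]

/-- Split a filtered sum over a sum type. -/
lemma sum_filter_sumtype {X Y : Type*} [Fintype X] [Fintype Y] (P : X ⊕ Y → Prop)
    (f : X → F) (g : Y → F) :
    ∑ u ∈ univ.filter P, Sum.elim f g u =
      (∑ x ∈ univ.filter (fun x => P (Sum.inl x)), f x) +
      ∑ y ∈ univ.filter (fun y => P (Sum.inr y)), g y := by
  rw [sum_filter, sum_filter, sum_filter, Fintype.sum_sum_type]
  simp

/-- Regroup: if two functions have equal sums on every class of an equivalence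
relation `ε`, and `m` is constant on `ε`-classes, then they have equal sums on
every fiber of `m`. -/
lemma regroup {T κ : Type*} [Fintype T] (ε : T → T → Prop) (hε : Equivalence ε)
    (m : T → κ) (hm : ∀ u v, ε u v → m u = m v) (F1 F2 : T → F)
    (hbal : ∀ u, ∑ v ∈ univ.filter (ε u), F1 v = ∑ v ∈ univ.filter (ε u), F2 v)
    (k₀ : κ) :
    ∑ v ∈ univ.filter (fun v => m v = k₀), F1 v =
      ∑ v ∈ univ.filter (fun v => m v = k₀), F2 v := by
  classical
  let s : Setoid T := ⟨ε, hε⟩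
  have key : ∀ (G : T → F), (∀ u, ∑ v ∈ univ.filter (ε u), G v = ∑ v ∈ univ.filter (ε u), F2 v → True) → True := fun _ _ => trivial
  have main : ∀ G : T → F,
      ∑ v ∈ univ.filter (fun v => m v = k₀), G v =
        ∑ c : Quotient s, if m c.out = k₀ then ∑ v ∈ univ.filter (ε c.out), G v else 0 := by
    intro G
    rw [← Finset.sum_fiberwise_of_maps_to (g := fun v => (Quotient.mk s v : Quotient s))
      (fun v _ => Finset.mem_univ _) G]
    refine Finset.sum_congr rfl fun c _ => ?_
    have hcls : ∀ v : T, (Quotient.mk s v = c) ↔ ε c.out v := by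
      intro v
      constructor
      · intro h
        have h' : Quotient.mk s v = Quotient.mk s c.out := by rw [h, Quotient.out_eq]
        exact hε.symm (Quotient.exact h')
      · intro h
        have h' : Quotient.mk s c.out = Quotient.mk s v := Quotient.sound h
        rw [← h', Quotient.out_eq]
    by_cases hc : m c.out = k₀
    · rw [if_pos hc]
      refine Finset.sum_congr ?_ fun _ _ => rfl
      ext v
      simp only [Finset.mem_filter, Finset.mem_univ, true_and, hcls]
      constructor
      · rintro ⟨_, h⟩; exact h
      · intro h; exact ⟨by rw [← hm _ _ h, hc], h⟩
    · rw [if_neg hc]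
      have : (univ.filter (fun v => m v = k₀)).filter (fun v => Quotient.mk s v = c) = ∅ := by
        ext v
        simp only [Finset.mem_filter, Finset.mem_univ, true_and, hcls, Finset.notMem_empty,
          iff_false, not_and]
        intro hv hcv
        exact hc (by rw [hm _ _ hcv]; exact hv)
      rw [this, Finset.sum_empty]
  rw [main F1, main F2]
  refine Finset.sum_congr rfl fun c _ => ?_
  by_cases hc : m c.out = k₀
  · rw [if_pos hc, if_pos hc, hbal]
  · rw [if_neg hc, if_neg hc]

/-- `EqvGen` of a symmetric relation equals its reflexive-transitive closure. -/
lemma eqvGen_iff_rtg {Y : Type*} {r : Y → Y → Prop} (hs : ∀ a b, r a b → r b a) {a b : Y} :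
    Relation.EqvGen r a b ↔ Relation.ReflTransGen r a b := by
  have hsymm : ∀ {a b : Y}, Relation.ReflTransGen r a b → Relation.ReflTransGen r b a := by
    intro a b h
    induction h with
    | refl => exact Relation.ReflTransGen.refl
    | tail _ h₂ ih => exact Relation.ReflTransGen.trans (Relation.ReflTransGen.single (hs _ _ h₂)) ih
  constructor
  · intro h
    induction h with
    | rel _ _ h => exact Relation.ReflTransGen.single h
    | refl => exact Relation.ReflTransGen.refl
    | symm _ _ _ ih => exact hsymm ih
    | trans _ _ _ _ _ ih₁ ih₂ => exact ih₁.trans ih₂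
  · intro h
    induction h with
    | refl => exact Relation.EqvGen.refl _
    | tail _ h₂ ih => exact Relation.EqvGen.trans _ _ _ ih (Relation.EqvGen.rel _ _ h₂)

/-- A choice-based "spreading" of `iX` over `Y`: there is `a : Y → F` such that
the sum of `a` over the `Y`-part of any class of `α` meeting `Y` equals the sum
of `iX` over the `X`-part. -/
lemma exists_spread {X Y : Type*} [Fintype X] [Fintype Y] (α : X ⊕ Y → X ⊕ Y → Prop)
    (hα : Equivalence α) (iX : X → F) :
    ∃ a : Y → F, ∀ y : Y,
      ∑ y' ∈ univ.filter (fun y' => α (Sum.inr y) (Sum.inr y')), a y' =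
      ∑ x ∈ univ.filter (fun x => α (Sum.inr y) (Sum.inl x)), iX x := by
  classical
  refine ⟨fun y => ∑ x ∈ univ.filter
      (fun x => ∃ h : (∃ y', α (Sum.inl x) (Sum.inr y')), h.choose = y), iX x, fun y => ?_⟩
  set s : Finset X := univ.filter (fun x => α (Sum.inr y) (Sum.inl x)) with hs
  set t : Finset Y := univ.filter (fun y' => α (Sum.inr y) (Sum.inr y')) with ht
  set g : X → Y := fun x => if h : ∃ y', α (Sum.inl x) (Sum.inr y') then h.choose else y with hg
  have hmaps : ∀ x ∈ s, g x ∈ t := by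
    intro x hx
    rw [hs, Finset.mem_filter] at hx
    have hex : ∃ y', α (Sum.inl x) (Sum.inr y') := ⟨y, hα.symm hx.2⟩
    rw [ht, Finset.mem_filter]
    refine ⟨Finset.mem_univ _, ?_⟩
    rw [hg]
    simp only [dif_pos hex]
    exact hα.trans hx.2 hex.choose_spec
  rw [← Finset.sum_fiberwise_of_maps_to hmaps iX]
  refine Finset.sum_congr rfl fun y' hy' => ?_
  rw [ht, Finset.mem_filter] at hy'
  refine Finset.sum_congr ?_ fun _ _ => rfl
  ext x
  simp only [Finset.mem_filter, Finset.mem_univ, true_and, hs, hg]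
  constructor
  · rintro ⟨hex, hch⟩
    have h1 : α (Sum.inl x) (Sum.inr y') := hch ▸ hex.choose_spec
    exact ⟨hα.trans hy'.2 (hα.symm h1), by simp only [dif_pos hex]; exact hch⟩
  · rintro ⟨hx, hgx⟩
    have hex : ∃ y'', α (Sum.inl x) (Sum.inr y'') := ⟨y, hα.symm hx⟩
    rw [dif_pos hex] at hgx
    exact ⟨hex, hgx⟩

lemma sum_filter_ext {T : Type*} [Fintype T] {P Q : T → Prop} {iP : DecidablePred P}
    {iQ : DecidablePred Q} (h : ∀ x, P x ↔ Q x) (f : T → F) :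
    ∑ x ∈ @Finset.filter _ P iP univ, f x = ∑ x ∈ @Finset.filter _ Q iQ univ, f x := by
  have he : @Finset.filter _ P iP univ = @Finset.filter _ Q iQ univ := by
    ext x
    simp only [Finset.mem_filter, Finset.mem_univ, true_and]
    exact h x
  rw [he]

end Helpers


section CoreHelp

variable {Y : Type*}

lemma rtg_symm {r : Y → Y → Prop} (hs : ∀ a b, r a b → r b a) {a b : Y}
    (h : Relation.ReflTransGen r a b) : Relation.ReflTransGen r b a := by
  induction h with
  | refl => exact Relation.ReflTransGen.refl
  | tail _ h₂ ih => exact Relation.ReflTransGen.trans (Relation.ReflTransGen.single (hs _ _ h₂)) ih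

/-- First-exit decomposition of a path from `y₀`. -/
lemma rtg_exit {r : Y → Y → Prop} {y₀ y : Y} (h : Relation.ReflTransGen r y₀ y) :
    y = y₀ ∨ ∃ u, r y₀ u ∧ u ≠ y₀ ∧
      Relation.ReflTransGen (fun a b => r a b ∧ a ≠ y₀ ∧ b ≠ y₀) u y := by
  induction h with
  | refl => exact Or.inl rfl
  | @tail b c hab hbc ih =>
    by_cases hc : c = y₀
    · exact Or.inl hc
    by_cases hb : b = y₀
    · exact Or.inr ⟨c, hb ▸ hbc, hc, Relation.ReflTransGen.refl⟩
    · rcases ih with h | ⟨u, h1, h2, h3⟩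
      · exact absurd h hb
      · exact Or.inr ⟨u, h1, h2, h3.tail ⟨hbc, hb, hc⟩⟩

/-- A path which cannot reach `y₀` avoids `y₀`. -/
lemma rtg_avoid {r : Y → Y → Prop} {y₀ y y' : Y} (h : Relation.ReflTransGen r y y')
    (hny : ¬ Relation.ReflTransGen r y y₀) :
    Relation.ReflTransGen (fun a b => r a b ∧ a ≠ y₀ ∧ b ≠ y₀) y y' := by
  induction h with
  | refl => exact Relation.ReflTransGen.refl
  | @tail b c hab hbc ih =>
    have hb : b ≠ y₀ := fun h => hny (h ▸ hab)
    have hc : c ≠ y₀ := fun h => hny (h ▸ hab.tail hbc)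
    exact ih.tail ⟨hbc, hb, hc⟩

lemma sum_update_mem {F : Type*} [Field F] {s : Finset Y} {f : Y → F} {i : Y} (hi : i ∈ s)
    (c : F) : ∑ x ∈ s, Function.update f i (f i + c) x = (∑ x ∈ s, f x) + c := by
  classical
  rw [Finset.sum_update_of_mem hi, Finset.sum_eq_sum_sdiff_singleton_add hi f]
  ring

lemma sum_update_not_mem {F : Type*} [Field F] {s : Finset Y} {f : Y → F} {i : Y} (hi : i ∉ s)
    (c : F) : ∑ x ∈ s, Function.update f i c x = ∑ x ∈ s, f x := by
  refine Finset.sum_congr rfl fun x hx => ?_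
  have hxi : x ≠ i := fun h => hi (h ▸ hx)
  exact Function.update_of_ne hxi _ _

end CoreHelp

section Core

variable {Y : Type*} [Fintype Y] {F : Type*} [Field F]

/-- The joined "one-step" relation of `p` and `q` within `t`. -/
def rbase (p q : Y → Y → Prop) (t : Finset Y) : Y → Y → Prop :=
  fun u v => u ∈ t ∧ v ∈ t ∧ (p u v ∨ q u v)

/-- **Core feasibility lemma**: if `a` and `b` have equal sums over every
connected component (within `t`) of the join of the two equivalence relations
`p` and `q`, then there is a single function `w` whose sums over `p`-classes
agree with `a` and over `q`-classes agree with `b`. -/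
theorem core_feasible (p q : Y → Y → Prop) (hp : Equivalence p) (hq : Equivalence q) :
    ∀ (t : Finset Y) (a b : Y → F),
      (∀ y ∈ t,
        ∑ y' ∈ t.filter (fun y' => Relation.ReflTransGen (rbase p q t) y y'), a y' =
        ∑ y' ∈ t.filter (fun y' => Relation.ReflTransGen (rbase p q t) y y'), b y') →
      ∃ w : Y → F,
        (∀ y ∈ t, ∑ y' ∈ t.filter (fun y' => p y y'), w y' =
                  ∑ y' ∈ t.filter (fun y' => p y y'), a y') ∧
        (∀ y ∈ t, ∑ y' ∈ t.filter (fun y' => q y y'), w y' =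
                  ∑ y' ∈ t.filter (fun y' => q y y'), b y') := by
  intro t
  induction t using Finset.strongInduction with
  | _ t ih =>
  intro a b hbal
  rcases t.eq_empty_or_nonempty with rfl | ⟨y₀, hy₀⟩
  · exact ⟨0, by simp, by simp⟩
  set t' := t.erase y₀ with ht'def
  have htsub : t' ⊂ t := Finset.erase_ssubset hy₀
  set r := rbase p q t with hrdef
  set r' := rbase p q t' with hr'def
  have hrsymm : ∀ u v : Y, r u v → r v u := fun u v ⟨h1, h2, h3⟩ =>
    ⟨h2, h1, h3.imp hp.symm hq.symm⟩
  have hr'symm : ∀ u v : Y, r' u v → r' v u := fun u v ⟨h1, h2, h3⟩ =>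
    ⟨h2, h1, h3.imp hp.symm hq.symm⟩
  have hr'r : ∀ u v : Y, r' u v → r u v := fun u v ⟨h1, h2, h3⟩ =>
    ⟨Finset.mem_of_mem_erase h1, Finset.mem_of_mem_erase h2, h3⟩
  have hmemt' : ∀ {u v : Y}, Relation.ReflTransGen r' u v → u ∈ t' → v ∈ t' := by
    intro u v h hu
    induction h with
    | refl => exact hu
    | tail _ h₂ _ => exact h₂.2.1
  -- the two cut components
  set Cof : (Y → Y → Prop) → Finset Y := fun ρ =>
    t'.filter (fun y' => ∃ u, u ∈ t' ∧ ρ y₀ u ∧ Relation.ReflTransGen r' u y') with hCof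
  have hCofmem : ∀ (ρ : Y → Y → Prop) (y' : Y),
      y' ∈ Cof ρ ↔ y' ∈ t' ∧ ∃ u, u ∈ t' ∧ ρ y₀ u ∧ Relation.ReflTransGen r' u y' := by
    intro ρ y'; rw [hCof]; simp [Finset.mem_filter]
  have hclosed : ∀ (ρ : Y → Y → Prop) (u v : Y), u ∈ Cof ρ →
      Relation.ReflTransGen r' u v → v ∈ Cof ρ := by
    intro ρ u v hu huv
    rw [hCofmem] at hu ⊢
    obtain ⟨hut, u₁, hu₁, hρ, hpath⟩ := hu
    exact ⟨hmemt' huv hut, u₁, hu₁, hρ, hpath.trans huv⟩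
  have hconn : ∀ (ρ : Y → Y → Prop),
      (∀ u v : Y, ρ y₀ u → ρ y₀ v → (p u v ∨ q u v)) →
      ∀ u v : Y, u ∈ Cof ρ → v ∈ Cof ρ → Relation.ReflTransGen r' u v := by
    intro ρ hρ u v hu hv
    rw [hCofmem] at hu hv
    obtain ⟨hut, u₁, hu₁, hρ₁, hpath₁⟩ := hu
    obtain ⟨hvt, v₁, hv₁, hρ₂, hpath₂⟩ := hv
    have hedge : r' u₁ v₁ := ⟨hu₁, hv₁, hρ u₁ v₁ hρ₁ hρ₂⟩
    exact ((rtg_symm hr'symm hpath₁).trans (Relation.ReflTransGen.single hedge)).trans hpath₂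
  have hcompo : ∀ (ρ : Y → Y → Prop),
      (∀ u v : Y, ρ y₀ u → ρ y₀ v → (p u v ∨ q u v)) →
      ∀ y ∈ Cof ρ, t'.filter (fun y' => Relation.ReflTransGen r' y y') = Cof ρ := by
    intro ρ hρ y hy
    ext y'
    simp only [Finset.mem_filter]
    constructor
    · rintro ⟨hyt, hpath⟩
      exact hclosed ρ y y' hy hpath
    · intro hy'
      exact ⟨((hCofmem ρ y').1 hy').1, hconn ρ hρ y y' hy hy'⟩
  have hpedge : ∀ u v : Y, p y₀ u → p y₀ v → (p u v ∨ q u v) := fun u v h1 h2 =>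
    Or.inl (hp.trans (hp.symm h1) h2)
  have hqedge : ∀ u v : Y, q y₀ u → q y₀ v → (p u v ∨ q u v) := fun u v h1 h2 =>
    Or.inr (hq.trans (hq.symm h1) h2)
  set C₁ := Cof p with hC₁def
  set C₂ := Cof q with hC₂def
  have hC₁t' : C₁ ⊆ t' := Finset.filter_subset _ _
  have hC₂t' : C₂ ⊆ t' := Finset.filter_subset _ _
  have hy₀C₁ : y₀ ∉ C₁ := fun h => Finset.notMem_erase y₀ t (hC₁t' h)
  have hy₀C₂ : y₀ ∉ C₂ := fun h => Finset.notMem_erase y₀ t (hC₂t' h)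
  -- overlap implies equality
  have hC12 : ∀ c : Y, c ∈ C₁ → c ∈ C₂ → C₁ = C₂ := by
    intro c hc1 hc2
    ext u
    constructor
    · intro hu; exact hclosed q c u hc2 (hconn p hpedge c u hc1 hu)
    · intro hu; exact hclosed p c u hc1 (hconn q hqedge c u hc2 hu)
  -- restricted relation matches r'
  have hrestr : ∀ u v : Y, (r u v ∧ u ≠ y₀ ∧ v ≠ y₀) ↔ r' u v := by
    intro u v
    constructor
    · rintro ⟨⟨h1, h2, h3⟩, h4, h5⟩
      exact ⟨Finset.mem_erase.2 ⟨h4, h1⟩, Finset.mem_erase.2 ⟨h5, h2⟩, h3⟩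
    · rintro ⟨h1, h2, h3⟩
      exact ⟨hr'r u v ⟨h1, h2, h3⟩, (Finset.mem_erase.1 h1).1, (Finset.mem_erase.1 h2).1⟩
  -- class of y₀ in t
  have hcls₀ : t.filter (fun y' => Relation.ReflTransGen r y₀ y') = insert y₀ (C₁ ∪ C₂) := by
    ext y'
    simp only [Finset.mem_filter, Finset.mem_insert, Finset.mem_union]
    constructor
    · rintro ⟨hyt, hpath⟩
      rcases rtg_exit hpath with h | ⟨u, hru, hune, hpath'⟩
      · exact Or.inl h
      · right
        have hut' : u ∈ t' := Finset.mem_erase.2 ⟨hune, hru.2.1⟩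
        have hpath'' : Relation.ReflTransGen r' u y' :=
          Relation.ReflTransGen.mono (r := fun a b => r a b ∧ a ≠ y₀ ∧ b ≠ y₀) (p := r') (fun a b hab => (hrestr a b).1 ⟨hab.1, hab.2.1, hab.2.2⟩) _ _ hpath'
        have hy't' : y' ∈ t' := hmemt' hpath'' hut'
        rcases hru.2.2 with hpu | hqu
        · exact Or.inl ((hCofmem p y').2 ⟨hy't', u, hut', hpu, hpath''⟩)
        · exact Or.inr ((hCofmem q y').2 ⟨hy't', u, hut', hqu, hpath''⟩)
    · rintro (rfl | hy')
      · exact ⟨hy₀, Relation.ReflTransGen.refl⟩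
      · have : ∀ ρ, (y' ∈ Cof ρ) → (∀ u v, ρ u v → (p u v ∨ q u v)) →
            y' ∈ t ∧ Relation.ReflTransGen r y₀ y' := by
          intro ρ hy' hsub
          obtain ⟨hy't, u, hut, hρ, hpath⟩ := (hCofmem ρ y').1 hy'
          refine ⟨Finset.mem_of_mem_erase hy't, ?_⟩
          have step : r y₀ u := ⟨hy₀, Finset.mem_of_mem_erase hut, hsub _ _ hρ⟩
          exact (Relation.ReflTransGen.single step).trans (Relation.ReflTransGen.mono (r := r') (p := r) hr'r _ _ hpath)
        rcases hy' with hy' | hy'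
        · exact this p hy' (fun u v h => Or.inl h)
        · exact this q hy' (fun u v h => Or.inr h)
  -- membership in C₁ ∪ C₂ from connection to y₀
  have hconn₀ : ∀ y ∈ t', y ∉ C₁ → y ∉ C₂ → ¬ Relation.ReflTransGen r y y₀ := by
    intro y hyt' h1 h2 hpath
    have : y ∈ t.filter (fun y' => Relation.ReflTransGen r y₀ y') :=
      Finset.mem_filter.2 ⟨Finset.mem_of_mem_erase hyt', rtg_symm hrsymm hpath⟩
    rw [hcls₀] at this
    simp only [Finset.mem_insert, Finset.mem_union] at this
    rcases this with rfl | h | h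
    · exact Finset.notMem_erase y t hyt'
    · exact h1 h
    · exact h2 h
  -- untouched classes
  have huncls : ∀ y ∈ t', y ∉ C₁ → y ∉ C₂ →
      t'.filter (fun y' => Relation.ReflTransGen r' y y') =
      t.filter (fun y' => Relation.ReflTransGen r y y') := by
    intro y hyt' h1 h2
    have hny₀ : ¬ Relation.ReflTransGen r y y₀ := hconn₀ y hyt' h1 h2
    ext y'
    simp only [Finset.mem_filter]
    constructor
    · rintro ⟨hy't, hpath⟩
      exact ⟨Finset.mem_of_mem_erase hy't, Relation.ReflTransGen.mono (r := r') (p := r) hr'r _ _ hpath⟩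
    · rintro ⟨hy't, hpath⟩
      have hy'ne : y' ≠ y₀ := fun h => hny₀ (h ▸ hpath)
      have : Relation.ReflTransGen r' y y' :=
        Relation.ReflTransGen.mono (r := fun a b => r a b ∧ a ≠ y₀ ∧ b ≠ y₀) (p := r') (fun a b hab => (hrestr a b).1 hab) _ _ (rtg_avoid hpath hny₀)
      exact ⟨Finset.mem_erase.2 ⟨hy'ne, hy't⟩, this⟩
  -- balance at y₀
  have hy₀CC : y₀ ∉ C₁ ∪ C₂ := by
    simp only [Finset.mem_union]; rintro (h | h); exacts [hy₀C₁ h, hy₀C₂ h]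
  have hbal₀ : a y₀ + ∑ y' ∈ C₁ ∪ C₂, a y' = b y₀ + ∑ y' ∈ C₁ ∪ C₂, b y' := by
    have := hbal y₀ hy₀
    rw [hcls₀, Finset.sum_insert hy₀CC, Finset.sum_insert hy₀CC] at this
    exact this
  -- the transferred value and updated targets
  set v : F := a y₀ + ∑ y' ∈ C₁, (a y' - b y') with hvdef
  set a' : Y → F := if hA : ∃ u, u ∈ t' ∧ p y₀ u then
      Function.update a hA.choose (a hA.choose + (a y₀ - v)) else a with ha'def
  set b' : Y → F := if hB : ∃ u, u ∈ t' ∧ q y₀ u then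
      Function.update b hB.choose (b hB.choose + (b y₀ - v)) else b with hb'def
  have hAC₁ : ∀ hA : ∃ u, u ∈ t' ∧ p y₀ u, hA.choose ∈ C₁ := by
    intro hA
    exact (hCofmem p _).2 ⟨hA.choose_spec.1, hA.choose,
      hA.choose_spec.1, hA.choose_spec.2, Relation.ReflTransGen.refl⟩
  have hBC₂ : ∀ hB : ∃ u, u ∈ t' ∧ q y₀ u, hB.choose ∈ C₂ := by
    intro hB
    exact (hCofmem q _).2 ⟨hB.choose_spec.1, hB.choose,
      hB.choose_spec.1, hB.choose_spec.2, Relation.ReflTransGen.refl⟩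
  have hC₁A : ∀ c : Y, c ∈ C₁ → ∃ u, u ∈ t' ∧ p y₀ u := by
    intro c hc
    obtain ⟨_, u, hut, hpu, _⟩ := (hCofmem p c).1 hc
    exact ⟨u, hut, hpu⟩
  have hC₂B : ∀ c : Y, c ∈ C₂ → ∃ u, u ∈ t' ∧ q y₀ u := by
    intro c hc
    obtain ⟨_, u, hut, hqu, _⟩ := (hCofmem q c).1 hc
    exact ⟨u, hut, hqu⟩
  -- sums of a' / b' over finsets
  have ha'sum_mem : ∀ (s : Finset Y) (hA : ∃ u, u ∈ t' ∧ p y₀ u), hA.choose ∈ s →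
      ∑ y' ∈ s, a' y' = (∑ y' ∈ s, a y') + (a y₀ - v) := by
    intro s hA hmem
    rw [ha'def, dif_pos hA]
    exact sum_update_mem hmem _
  have ha'sum_of_disj : ∀ s : Finset Y, Disjoint s C₁ → ∑ y' ∈ s, a' y' = ∑ y' ∈ s, a y' := by
    intro s hdisj
    rw [ha'def]
    split_ifs with hA
    · exact sum_update_not_mem (fun hmem => (Finset.disjoint_left.1 hdisj) hmem (hAC₁ hA)) _
    · rfl
  have hb'sum_mem : ∀ (s : Finset Y) (hB : ∃ u, u ∈ t' ∧ q y₀ u), hB.choose ∈ s →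
      ∑ y' ∈ s, b' y' = (∑ y' ∈ s, b y') + (b y₀ - v) := by
    intro s hB hmem
    rw [hb'def, dif_pos hB]
    exact sum_update_mem hmem _
  have hb'sum_of_disj : ∀ s : Finset Y, Disjoint s C₂ → ∑ y' ∈ s, b' y' = ∑ y' ∈ s, b y' := by
    intro s hdisj
    rw [hb'def]
    split_ifs with hB
    · exact sum_update_not_mem (fun hmem => (Finset.disjoint_left.1 hdisj) hmem (hBC₂ hB)) _
    · rfl
  -- balance for the reduced problem
  have hbal' : ∀ y ∈ t',
      ∑ y' ∈ t'.filter (fun y' => Relation.ReflTransGen (rbase p q t') y y'), a' y' =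
      ∑ y' ∈ t'.filter (fun y' => Relation.ReflTransGen (rbase p q t') y y'), b' y' := by
    intro y hyt'
    by_cases hy1 : y ∈ C₁
    · -- component is C₁
      have hD : t'.filter (fun y' => Relation.ReflTransGen r' y y') = C₁ := hcompo p hpedge y hy1
      rw [← hr'def, hD]
      have hA : ∃ u, u ∈ t' ∧ p y₀ u := hC₁A y hy1
      rw [ha'sum_mem C₁ hA (hAC₁ hA)]
      by_cases hBin : ∃ hB : (∃ u, u ∈ t' ∧ q y₀ u), hB.choose ∈ C₁
      · obtain ⟨hB, hBC⟩ := hBin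
        have hCeq : C₁ = C₂ := hC12 _ hBC (hBC₂ hB)
        rw [hCeq] at hbal₀ ⊢
        rw [Finset.union_self] at hbal₀
        rw [hb'sum_mem C₂ hB (hBC₂ hB)]
        linear_combination hbal₀
      · -- C₂ is disjoint from C₁ (or qB empty)
        have hdisj : Disjoint C₁ C₂ := by
          rw [Finset.disjoint_left]
          intro c hc1 hc2
          exact hBin ⟨hC₂B c hc2, by
            have := hC12 c hc1 hc2
            rw [this]; exact hBC₂ _⟩
        rw [hb'sum_of_disj C₁ hdisj]
        rw [hvdef]
        rw [Finset.sum_sub_distrib]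
        ring
    · by_cases hy2 : y ∈ C₂
      · -- component is C₂, and C₁ ∩ C₂ = ∅
        have hD : t'.filter (fun y' => Relation.ReflTransGen r' y y') = C₂ := hcompo q hqedge y hy2
        rw [← hr'def, hD]
        have hdisj : Disjoint C₁ C₂ := by
          rw [Finset.disjoint_left]
          intro c hc1 hc2
          exact hy1 (by rw [hC12 c hc1 hc2]; exact hy2)
        have hB : ∃ u, u ∈ t' ∧ q y₀ u := hC₂B y hy2
        rw [hb'sum_mem C₂ hB (hBC₂ hB)]
        rw [ha'sum_of_disj C₂ hdisj.symm]
        rw [Finset.sum_union hdisj, Finset.sum_union hdisj] at hbal₀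
        rw [hvdef, Finset.sum_sub_distrib]
        linear_combination hbal₀
      · -- untouched component
        have hD : t'.filter (fun y' => Relation.ReflTransGen r' y y') =
            t.filter (fun y' => Relation.ReflTransGen r y y') := huncls y hyt' hy1 hy2
        have hdisj1 : Disjoint (t'.filter (fun y' => Relation.ReflTransGen r' y y')) C₁ := by
          rw [Finset.disjoint_left]
          intro c hc hc1
          obtain ⟨hct, hpath⟩ := Finset.mem_filter.1 hc
          exact hy1 (hclosed p c y hc1 (rtg_symm hr'symm hpath))
        have hdisj2 : Disjoint (t'.filter (fun y' => Relation.ReflTransGen r' y y')) C₂ := by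
          rw [Finset.disjoint_left]
          intro c hc hc2
          obtain ⟨hct, hpath⟩ := Finset.mem_filter.1 hc
          exact hy2 (hclosed q c y hc2 (rtg_symm hr'symm hpath))
        rw [← hr'def, ha'sum_of_disj _ hdisj1, hb'sum_of_disj _ hdisj2, hD]
        exact hbal y (Finset.mem_of_mem_erase hyt')
  -- recursive solution
  obtain ⟨w', hw'p, hw'q⟩ := ih t' htsub a' b' hbal'
  refine ⟨Function.update w' y₀ v, ?_, ?_⟩
  · -- p-part
    intro y hyt
    by_cases hpy : p y y₀
    · have hins : t.filter (fun y' => p y y') = insert y₀ (t'.filter (fun y' => p y y')) := by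
        ext u
        simp only [Finset.mem_filter, Finset.mem_insert]
        constructor
        · rintro ⟨hut, hpu⟩
          by_cases hu : u = y₀
          · exact Or.inl hu
          · exact Or.inr ⟨Finset.mem_erase.2 ⟨hu, hut⟩, hpu⟩
        · rintro (rfl | ⟨hut, hpu⟩)
          · exact ⟨hy₀, hpy⟩
          · exact ⟨Finset.mem_of_mem_erase hut, hpu⟩
      have hy₀nf : y₀ ∉ t'.filter (fun y' => p y y') :=
        fun h => Finset.notMem_erase y₀ t (Finset.mem_filter.1 h).1
      rw [hins, Finset.sum_insert hy₀nf, Finset.sum_insert hy₀nf]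
      rw [Function.update_self]
      have hwsum : ∑ y' ∈ t'.filter (fun y' => p y y'), Function.update w' y₀ v y' =
          ∑ y' ∈ t'.filter (fun y' => p y y'), w' y' :=
        sum_update_not_mem hy₀nf _
      rw [hwsum]
      by_cases hA : ∃ u, u ∈ t' ∧ p y₀ u
      · have huA := hA.choose_spec
        have hfeq : t'.filter (fun y' => p y y') = t'.filter (fun y' => p hA.choose y') := by
          apply Finset.filter_congr
          intro u _
          constructor
          · intro h; exact hp.trans (hp.trans (hp.symm huA.2) (hp.symm hpy)) h
          · intro h; exact hp.trans (hp.trans hpy huA.2) h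
        have hmemA : hA.choose ∈ t'.filter (fun y' => p hA.choose y') :=
          Finset.mem_filter.2 ⟨huA.1, hp.refl _⟩
        rw [hfeq, hw'p hA.choose huA.1, ha'sum_mem _ hA hmemA]
        ring
      · have hempty : t'.filter (fun y' => p y y') = ∅ := by
          rw [Finset.filter_eq_empty_iff]
          intro u hut' hpu
          exact hA ⟨u, hut', hp.trans (hp.symm hpy) hpu⟩
        have hC₁empty : C₁ = ∅ := by
          rw [Finset.eq_empty_iff_forall_notMem]
          intro c hc
          exact hA (hC₁A c hc)
        rw [hempty, Finset.sum_empty, Finset.sum_empty, hvdef, hC₁empty, Finset.sum_empty]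
        ring
    · have hyne : y ≠ y₀ := fun h => hpy (h ▸ hp.refl y)
      have hyt' : y ∈ t' := Finset.mem_erase.2 ⟨hyne, hyt⟩
      have hfeq : t.filter (fun y' => p y y') = t'.filter (fun y' => p y y') := by
        ext u
        simp only [Finset.mem_filter, ht'def, Finset.mem_erase]
        constructor
        · rintro ⟨hut, hpu⟩
          exact ⟨⟨fun h => hpy (h ▸ hpu), hut⟩, hpu⟩
        · rintro ⟨⟨_, hut⟩, hpu⟩
          exact ⟨hut, hpu⟩
      have hy₀nf : y₀ ∉ t'.filter (fun y' => p y y') :=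
        fun h => Finset.notMem_erase y₀ t (Finset.mem_filter.1 h).1
      rw [hfeq, sum_update_not_mem hy₀nf, hw'p y hyt']
      -- now show sum of a' = sum of a on this class
      rw [ha'def]
      split_ifs with hA
      · refine sum_update_not_mem ?_ _
        intro hmem
        have := (Finset.mem_filter.1 hmem).2
        exact hpy (hp.trans this (hp.symm hA.choose_spec.2))
      · rfl
  · -- q-part
    intro y hyt
    by_cases hqy : q y y₀
    · have hins : t.filter (fun y' => q y y') = insert y₀ (t'.filter (fun y' => q y y')) := by
        ext u
        simp only [Finset.mem_filter, Finset.mem_insert]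
        constructor
        · rintro ⟨hut, hqu⟩
          by_cases hu : u = y₀
          · exact Or.inl hu
          · exact Or.inr ⟨Finset.mem_erase.2 ⟨hu, hut⟩, hqu⟩
        · rintro (rfl | ⟨hut, hqu⟩)
          · exact ⟨hy₀, hqy⟩
          · exact ⟨Finset.mem_of_mem_erase hut, hqu⟩
      have hy₀nf : y₀ ∉ t'.filter (fun y' => q y y') :=
        fun h => Finset.notMem_erase y₀ t (Finset.mem_filter.1 h).1
      rw [hins, Finset.sum_insert hy₀nf, Finset.sum_insert hy₀nf]
      rw [Function.update_self]
      have hwsum : ∑ y' ∈ t'.filter (fun y' => q y y'), Function.update w' y₀ v y' =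
          ∑ y' ∈ t'.filter (fun y' => q y y'), w' y' :=
        sum_update_not_mem hy₀nf _
      rw [hwsum]
      by_cases hB : ∃ u, u ∈ t' ∧ q y₀ u
      · have huB := hB.choose_spec
        have hfeq : t'.filter (fun y' => q y y') = t'.filter (fun y' => q hB.choose y') := by
          apply Finset.filter_congr
          intro u _
          constructor
          · intro h; exact hq.trans (hq.trans (hq.symm huB.2) (hq.symm hqy)) h
          · intro h; exact hq.trans (hq.trans hqy huB.2) h
        have hmemB : hB.choose ∈ t'.filter (fun y' => q hB.choose y') :=
          Finset.mem_filter.2 ⟨huB.1, hq.refl _⟩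
        rw [hfeq, hw'q hB.choose huB.1, hb'sum_mem _ hB hmemB]
        ring
      · -- q-class of y₀ within t is just {y₀}; here we need v = b y₀, using hbal₀
        have hempty : t'.filter (fun y' => q y y') = ∅ := by
          rw [Finset.filter_eq_empty_iff]
          intro u hut' hqu
          exact hB ⟨u, hut', hq.trans (hq.symm hqy) hqu⟩
        have hC₂empty : C₂ = ∅ := by
          rw [Finset.eq_empty_iff_forall_notMem]
          intro c hc
          exact hB (hC₂B c hc)
        have hbal₀' : a y₀ + ∑ y' ∈ C₁, a y' = b y₀ + ∑ y' ∈ C₁, b y' := by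
          rw [hC₂empty, Finset.union_empty] at hbal₀
          exact hbal₀
        rw [hempty, Finset.sum_empty, Finset.sum_empty, hvdef, Finset.sum_sub_distrib]
        linear_combination hbal₀'
    · have hyne : y ≠ y₀ := fun h => hqy (h ▸ hq.refl y)
      have hyt' : y ∈ t' := Finset.mem_erase.2 ⟨hyne, hyt⟩
      have hfeq : t.filter (fun y' => q y y') = t'.filter (fun y' => q y y') := by
        ext u
        simp only [Finset.mem_filter, ht'def, Finset.mem_erase]
        constructor
        · rintro ⟨hut, hqu⟩
          exact ⟨⟨fun h => hqy (h ▸ hqu), hut⟩, hqu⟩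
        · rintro ⟨⟨_, hut⟩, hqu⟩
          exact ⟨hut, hqu⟩
      have hy₀nf : y₀ ∉ t'.filter (fun y' => q y y') :=
        fun h => Finset.notMem_erase y₀ t (Finset.mem_filter.1 h).1
      rw [hfeq, sum_update_not_mem hy₀nf, hw'q y hyt']
      rw [hb'def]
      split_ifs with hB
      · refine sum_update_not_mem ?_ _
        intro hmem
        have := (Finset.mem_filter.1 hmem).2
        exact hqy (hq.trans this (hq.symm hB.choose_spec.2))
      · rfl

end Core


section Char

variable {X Y Z : Type*}
variable (α : X ⊕ Y → X ⊕ Y → Prop) (β : Y ⊕ Z → Y ⊕ Z → Prop)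

/-- The generating relation for the composite corelation. -/
def genRel : (X ⊕ (Y ⊕ Z)) → (X ⊕ (Y ⊕ Z)) → Prop := fun u v =>
  (∃ p q : X ⊕ Y, α p q ∧ u = Sum.map id Sum.inl p ∧ v = Sum.map id Sum.inl q) ∨
  (∃ p q : Y ⊕ Z, β p q ∧ u = Sum.inr p ∧ v = Sum.inr q)

/-- The "join" relation on `Y`. -/
def jRel : Y → Y → Prop := fun y y' =>
  α (Sum.inr y) (Sum.inr y') ∨ β (Sum.inl y) (Sum.inl y')

def sJ : Setoid Y := Relation.EqvGen.setoid (jRel α β)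

variable (hα : Equivalence α) (hβ : Equivalence β)

def sA : Setoid (X ⊕ Y) := ⟨α, hα⟩

def sB : Setoid (Y ⊕ Z) := ⟨β, hβ⟩

/-- A classifying map for the equivalence relation generated by `genRel`. -/
noncomputable def cmap : X ⊕ (Y ⊕ Z) →
    Quotient (sJ α β) ⊕ (Quotient (sA α hα) ⊕ Quotient (sB β hβ))
  | Sum.inl x =>
      if h : ∃ y, α (Sum.inl x) (Sum.inr y) then Sum.inl (Quotient.mk (sJ α β) h.choose)
      else Sum.inr (Sum.inl (Quotient.mk (sA α hα) (Sum.inl x)))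
  | Sum.inr (Sum.inl y) => Sum.inl (Quotient.mk (sJ α β) y)
  | Sum.inr (Sum.inr z) =>
      if h : ∃ y, β (Sum.inl y) (Sum.inr z) then Sum.inl (Quotient.mk (sJ α β) h.choose)
      else Sum.inr (Sum.inr (Quotient.mk (sB β hβ) (Sum.inr z)))

lemma jquot {y y' : Y} :
    (Quotient.mk (sJ α β) y = Quotient.mk (sJ α β) y') ↔ Relation.EqvGen (jRel α β) y y' := by
  constructor
  · intro h
    exact Quotient.exact h
  · intro h
    exact Quotient.sound h

lemma cmap_LY (y : Y) :
    cmap α β hα hβ (Sum.inr (Sum.inl y)) = Sum.inl (Quotient.mk (sJ α β) y) := rfl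

lemma cmap_X_of {x : X} {y : Y} (h : α (Sum.inl x) (Sum.inr y)) :
    cmap α β hα hβ (Sum.inl x) = Sum.inl (Quotient.mk (sJ α β) y) := by
  have hex : ∃ y', α (Sum.inl x) (Sum.inr y') := ⟨y, h⟩
  show (if h : ∃ y, α (Sum.inl x) (Sum.inr y) then Sum.inl (Quotient.mk (sJ α β) h.choose)
      else Sum.inr (Sum.inl (Quotient.mk (sA α hα) (Sum.inl x)))) = _
  rw [dif_pos hex]
  congr 1
  exact Quotient.sound (Relation.EqvGen.rel _ _
    (Or.inl (hα.trans (hα.symm hex.choose_spec) h)))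

lemma cmap_X_none {x : X} (h : ¬ ∃ y, α (Sum.inl x) (Sum.inr y)) :
    cmap α β hα hβ (Sum.inl x) = Sum.inr (Sum.inl (Quotient.mk (sA α hα) (Sum.inl x))) := by
  show (if h : ∃ y, α (Sum.inl x) (Sum.inr y) then Sum.inl (Quotient.mk (sJ α β) h.choose)
      else Sum.inr (Sum.inl (Quotient.mk (sA α hα) (Sum.inl x)))) = _
  rw [dif_neg h]

lemma cmap_Z_of {z : Z} {y : Y} (h : β (Sum.inl y) (Sum.inr z)) :
    cmap α β hα hβ (Sum.inr (Sum.inr z)) = Sum.inl (Quotient.mk (sJ α β) y) := by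
  have hex : ∃ y', β (Sum.inl y') (Sum.inr z) := ⟨y, h⟩
  show (if h : ∃ y, β (Sum.inl y) (Sum.inr z) then Sum.inl (Quotient.mk (sJ α β) h.choose)
      else Sum.inr (Sum.inr (Quotient.mk (sB β hβ) (Sum.inr z)))) = _
  rw [dif_pos hex]
  congr 1
  exact Quotient.sound (Relation.EqvGen.rel _ _
    (Or.inr (hβ.trans hex.choose_spec (hβ.symm h))))

lemma cmap_Z_none {z : Z} (h : ¬ ∃ y, β (Sum.inl y) (Sum.inr z)) :
    cmap α β hα hβ (Sum.inr (Sum.inr z)) =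
      Sum.inr (Sum.inr (Quotient.mk (sB β hβ) (Sum.inr z))) := by
  show (if h : ∃ y, β (Sum.inl y) (Sum.inr z) then Sum.inl (Quotient.mk (sJ α β) h.choose)
      else Sum.inr (Sum.inr (Quotient.mk (sB β hβ) (Sum.inr z)))) = _
  rw [dif_neg h]

lemma simα {p q : X ⊕ Y} (h : α p q) :
    Relation.EqvGen (genRel α β) (Sum.map id Sum.inl p) (Sum.map id Sum.inl q) :=
  Relation.EqvGen.rel _ _ (Or.inl ⟨p, q, h, rfl, rfl⟩)

lemma simβ {p q : Y ⊕ Z} (h : β p q) :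
    Relation.EqvGen (genRel α β) (Sum.inr p) (Sum.inr q) :=
  Relation.EqvGen.rel _ _ (Or.inr ⟨p, q, h, rfl, rfl⟩)

lemma simJ {y y' : Y} (h : Relation.EqvGen (jRel α β) y y') :
    Relation.EqvGen (genRel α β) (Sum.inr (Sum.inl y)) (Sum.inr (Sum.inl y')) := by
  induction h with
  | rel a b hab =>
    rcases hab with hab | hab
    · exact simα α β hab
    · exact simβ α β hab
  | refl => exact Relation.EqvGen.refl _
  | symm _ _ _ ih => exact Relation.EqvGen.symm _ _ ih
  | trans _ _ _ _ _ ih₁ ih₂ => exact Relation.EqvGen.trans _ _ _ ih₁ ih₂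

/-- The characterization: the equivalence generated by `genRel` is the kernel of `cmap`. -/
theorem sim_iff (u v : X ⊕ (Y ⊕ Z)) :
    Relation.EqvGen (genRel α β) u v ↔ cmap α β hα hβ u = cmap α β hα hβ v := by
  constructor
  · intro h
    induction h with
    | rel a b hab =>
      rcases hab with ⟨p, q, hpq, rfl, rfl⟩ | ⟨p, q, hpq, rfl, rfl⟩
      · -- α edge
        rcases p with x | y <;> rcases q with x' | y'
        · -- inl, inl
          simp only [Sum.map_inl, id_eq]
          by_cases hx : ∃ y, α (Sum.inl x) (Sum.inr y)
          · obtain ⟨y, hy⟩ := hx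
            rw [cmap_X_of α β hα hβ hy, cmap_X_of α β hα hβ (hα.trans (hα.symm hpq) hy)]
          · have hx' : ¬ ∃ y, α (Sum.inl x') (Sum.inr y) := by
              rintro ⟨y, hy⟩; exact hx ⟨y, hα.trans hpq hy⟩
            rw [cmap_X_none α β hα hβ hx, cmap_X_none α β hα hβ hx']
            exact congrArg _ (congrArg _ (Quotient.sound hpq))
        · simp only [Sum.map_inl, Sum.map_inr, id_eq]
          rw [cmap_X_of α β hα hβ hpq, cmap_LY]
        · simp only [Sum.map_inl, Sum.map_inr, id_eq]
          rw [cmap_X_of α β hα hβ (hα.symm hpq), cmap_LY]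
        · simp only [Sum.map_inr, id_eq]
          rw [cmap_LY, cmap_LY]
          exact congrArg _ (Quotient.sound (Relation.EqvGen.rel _ _ (Or.inl hpq)))
      · -- β edge
        rcases p with y | z <;> rcases q with y' | z'
        · rw [cmap_LY, cmap_LY]
          exact congrArg _ (Quotient.sound (Relation.EqvGen.rel _ _ (Or.inr hpq)))
        · rw [cmap_LY, cmap_Z_of α β hα hβ hpq]
        · rw [cmap_LY, cmap_Z_of α β hα hβ (hβ.symm hpq)]
        · by_cases hz : ∃ y, β (Sum.inl y) (Sum.inr z)
          · obtain ⟨y, hy⟩ := hz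
            rw [cmap_Z_of α β hα hβ hy, cmap_Z_of α β hα hβ (hβ.trans hy hpq)]
          · have hz' : ¬ ∃ y, β (Sum.inl y) (Sum.inr z') := by
              rintro ⟨y, hy⟩; exact hz ⟨y, hβ.trans hy (hβ.symm hpq)⟩
            rw [cmap_Z_none α β hα hβ hz, cmap_Z_none α β hα hβ hz']
            exact congrArg _ (congrArg _ (Quotient.sound hpq))
    | refl => rfl
    | symm _ _ _ ih => exact ih.symm
    | trans _ _ _ _ _ ih₁ ih₂ => exact ih₁.trans ih₂
  · intro h
    rcases u with x | (y | z) <;> rcases v with x' | (y' | z')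
    · -- X X
      by_cases hx : ∃ y, α (Sum.inl x) (Sum.inr y)
      · obtain ⟨y, hy⟩ := hx
        rw [cmap_X_of α β hα hβ hy] at h
        by_cases hx' : ∃ y, α (Sum.inl x') (Sum.inr y)
        · obtain ⟨y', hy'⟩ := hx'
          rw [cmap_X_of α β hα hβ hy'] at h
          have hJ : Relation.EqvGen (jRel α β) y y' := (jquot α β).1 (Sum.inl.inj h)
          exact Relation.EqvGen.trans _ _ _ (simα α β hy)
            (Relation.EqvGen.trans _ _ _ (simJ α β hJ)
              (Relation.EqvGen.symm _ _ (simα α β hy')))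
        · rw [cmap_X_none α β hα hβ hx'] at h
          exact absurd h (by simp)
      · rw [cmap_X_none α β hα hβ hx] at h
        by_cases hx' : ∃ y, α (Sum.inl x') (Sum.inr y)
        · obtain ⟨y', hy'⟩ := hx'
          rw [cmap_X_of α β hα hβ hy'] at h
          exact absurd h (by simp)
        · rw [cmap_X_none α β hα hβ hx'] at h
          simp only [Sum.inr.injEq, Sum.inl.injEq] at h
          have hrel : α (Sum.inl x) (Sum.inl x') := Quotient.exact h
          exact simα α β hrel
    · -- X Y
      by_cases hx : ∃ y, α (Sum.inl x) (Sum.inr y)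
      · obtain ⟨y, hy⟩ := hx
        rw [cmap_X_of α β hα hβ hy, cmap_LY] at h
        have hJ : Relation.EqvGen (jRel α β) y y' := (jquot α β).1 (Sum.inl.inj h)
        exact Relation.EqvGen.trans _ _ _ (simα α β hy) (simJ α β hJ)
      · rw [cmap_X_none α β hα hβ hx, cmap_LY] at h
        exact absurd h (by simp)
    · -- X Z
      by_cases hx : ∃ y, α (Sum.inl x) (Sum.inr y)
      · obtain ⟨y, hy⟩ := hx
        rw [cmap_X_of α β hα hβ hy] at h
        by_cases hz' : ∃ y, β (Sum.inl y) (Sum.inr z')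
        · obtain ⟨y', hy'⟩ := hz'
          rw [cmap_Z_of α β hα hβ hy'] at h
          have hJ : Relation.EqvGen (jRel α β) y y' := (jquot α β).1 (Sum.inl.inj h)
          exact Relation.EqvGen.trans _ _ _ (simα α β hy)
            (Relation.EqvGen.trans _ _ _ (simJ α β hJ) (simβ α β hy'))
        · rw [cmap_Z_none α β hα hβ hz'] at h
          exact absurd h (by simp)
      · rw [cmap_X_none α β hα hβ hx] at h
        by_cases hz' : ∃ y, β (Sum.inl y) (Sum.inr z')
        · rw [cmap_Z_of α β hα hβ hz'.choose_spec] at h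
          exact absurd h (by simp)
        · rw [cmap_Z_none α β hα hβ hz'] at h
          exact absurd h (by simp)
    · -- Y X
      by_cases hx' : ∃ y, α (Sum.inl x') (Sum.inr y)
      · obtain ⟨y₁, hy₁⟩ := hx'
        rw [cmap_X_of α β hα hβ hy₁, cmap_LY] at h
        have hJ : Relation.EqvGen (jRel α β) y y₁ := (jquot α β).1 (Sum.inl.inj h)
        exact Relation.EqvGen.trans _ _ _ (simJ α β hJ)
          (Relation.EqvGen.symm _ _ (simα α β hy₁))
      · rw [cmap_X_none α β hα hβ hx', cmap_LY] at h
        exact absurd h (by simp)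
    · -- Y Y
      rw [cmap_LY, cmap_LY] at h
      exact simJ α β ((jquot α β).1 (Sum.inl.inj h))
    · -- Y Z
      by_cases hz' : ∃ y, β (Sum.inl y) (Sum.inr z')
      · obtain ⟨y₁, hy₁⟩ := hz'
        rw [cmap_Z_of α β hα hβ hy₁, cmap_LY] at h
        have hJ : Relation.EqvGen (jRel α β) y y₁ := (jquot α β).1 (Sum.inl.inj h)
        exact Relation.EqvGen.trans _ _ _ (simJ α β hJ) (simβ α β hy₁)
      · rw [cmap_Z_none α β hα hβ hz', cmap_LY] at h
        exact absurd h (by simp)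
    · -- Z X
      by_cases hz : ∃ y, β (Sum.inl y) (Sum.inr z)
      · obtain ⟨y₁, hy₁⟩ := hz
        rw [cmap_Z_of α β hα hβ hy₁] at h
        by_cases hx' : ∃ y, α (Sum.inl x') (Sum.inr y)
        · obtain ⟨y₂, hy₂⟩ := hx'
          rw [cmap_X_of α β hα hβ hy₂] at h
          have hJ : Relation.EqvGen (jRel α β) y₁ y₂ := (jquot α β).1 (Sum.inl.inj h)
          exact Relation.EqvGen.trans _ _ _ (Relation.EqvGen.symm _ _ (simβ α β hy₁))
            (Relation.EqvGen.trans _ _ _ (simJ α β hJ)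
              (Relation.EqvGen.symm _ _ (simα α β hy₂)))
        · rw [cmap_X_none α β hα hβ hx'] at h
          exact absurd h (by simp)
      · rw [cmap_Z_none α β hα hβ hz] at h
        by_cases hx' : ∃ y, α (Sum.inl x') (Sum.inr y)
        · rw [cmap_X_of α β hα hβ hx'.choose_spec] at h
          exact absurd h (by simp)
        · rw [cmap_X_none α β hα hβ hx'] at h
          exact absurd h (by simp)
    · -- Z Y
      by_cases hz : ∃ y, β (Sum.inl y) (Sum.inr z)
      · obtain ⟨y₁, hy₁⟩ := hz
        rw [cmap_Z_of α β hα hβ hy₁, cmap_LY] at h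
        have hJ : Relation.EqvGen (jRel α β) y₁ y' := (jquot α β).1 (Sum.inl.inj h)
        exact Relation.EqvGen.trans _ _ _ (Relation.EqvGen.symm _ _ (simβ α β hy₁))
          (simJ α β hJ)
      · rw [cmap_Z_none α β hα hβ hz, cmap_LY] at h
        exact absurd h (by simp)
    · -- Z Z
      by_cases hz : ∃ y, β (Sum.inl y) (Sum.inr z)
      · obtain ⟨y₁, hy₁⟩ := hz
        rw [cmap_Z_of α β hα hβ hy₁] at h
        by_cases hz' : ∃ y, β (Sum.inl y) (Sum.inr z')
        · obtain ⟨y₂, hy₂⟩ := hz'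
          rw [cmap_Z_of α β hα hβ hy₂] at h
          have hJ : Relation.EqvGen (jRel α β) y₁ y₂ := (jquot α β).1 (Sum.inl.inj h)
          exact Relation.EqvGen.trans _ _ _ (Relation.EqvGen.symm _ _ (simβ α β hy₁))
            (Relation.EqvGen.trans _ _ _ (simJ α β hJ) (simβ α β hy₂))
        · rw [cmap_Z_none α β hα hβ hz'] at h
          exact absurd h (by simp)
      · rw [cmap_Z_none α β hα hβ hz] at h
        by_cases hz' : ∃ y, β (Sum.inl y) (Sum.inr z')
        · rw [cmap_Z_of α β hα hβ hz'.choose_spec] at h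
          exact absurd h (by simp)
        · rw [cmap_Z_none α β hα hβ hz'] at h
          simp only [Sum.inr.injEq] at h
          have hrel : β (Sum.inr z) (Sum.inr z') := Quotient.exact h
          exact simβ α β hrel

end Char

/-- The composite of a corelation `α` from `X` to `Y` (an equivalence relation on
`X ⊕ Y`) and a corelation `β` from `Y` to `Z`: take the smallest equivalence relation on
`X ⊕ Y ⊕ Z` containing the images of `α` and `β`, and restrict it to `X ⊕ Z`. -/
def corelComp {X Y Z : Type*} (α : X ⊕ Y → X ⊕ Y → Prop) (β : Y ⊕ Z → Y ⊕ Z → Prop) :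
    X ⊕ Z → X ⊕ Z → Prop := fun a b =>
  Relation.EqvGen
    (fun u v : X ⊕ (Y ⊕ Z) =>
      (∃ p q : X ⊕ Y, α p q ∧ u = Sum.map id Sum.inl p ∧ v = Sum.map id Sum.inl q) ∨
      (∃ p q : Y ⊕ Z, β p q ∧ u = Sum.inr p ∧ v = Sum.inr q))
    (Sum.map id Sum.inr a) (Sum.map id Sum.inr b)


section Main

variable {F : Type*} [Field F] {X Y Z : Type*} [Fintype X] [Fintype Y] [Fintype Z]
theorem statement18' (α : X ⊕ Y → X ⊕ Y → Prop) (hα : Equivalence α)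
    (β : Y ⊕ Z → Y ⊕ Z → Prop) (hβ : Equivalence β) (iX : X → F) (iZ : Z → F) :
    (∀ w : X ⊕ Z,
        ∑ x ∈ univ.filter (fun x => corelComp α β w (Sum.inl x)), iX x =
          ∑ z ∈ univ.filter (fun z => corelComp α β w (Sum.inr z)), iZ z) ↔
      ∃ iY : Y → F,
        (∀ w : X ⊕ Y,
          ∑ x ∈ univ.filter (fun x => α w (Sum.inl x)), iX x =
            ∑ y ∈ univ.filter (fun y => α w (Sum.inr y)), iY y) ∧
        ∀ w : Y ⊕ Z,
          ∑ y ∈ univ.filter (fun y => β w (Sum.inl y)), iY y =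
            ∑ z ∈ univ.filter (fun z => β w (Sum.inr z)), iZ z := by
  classical
  have hcorelComp : ∀ w w' : X ⊕ Z, corelComp α β w w' ↔
      cmap α β hα hβ (Sum.map id Sum.inr w) = cmap α β hα hβ (Sum.map id Sum.inr w') :=
    fun w w' => sim_iff α β hα hβ _ _
  -- rewrite the corelComp filters as fibers of cmap
  have hfX : ∀ w : X ⊕ Z, univ.filter (fun x => corelComp α β w (Sum.inl x)) =
      univ.filter (fun x : X =>
        cmap α β hα hβ (Sum.inl x) = cmap α β hα hβ (Sum.map id Sum.inr w)) := by
    intro w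
    apply Finset.filter_congr
    intro x _
    rw [hcorelComp w (Sum.inl x)]
    simp only [Sum.map_inl, id_eq]
    exact eq_comm
  have hfZ : ∀ w : X ⊕ Z, univ.filter (fun z => corelComp α β w (Sum.inr z)) =
      univ.filter (fun z : Z =>
        cmap α β hα hβ (Sum.inr (Sum.inr z)) = cmap α β hα hβ (Sum.map id Sum.inr w)) := by
    intro w
    apply Finset.filter_congr
    intro z _
    rw [hcorelComp w (Sum.inr z)]
    simp only [Sum.map_inr, id_eq]
    exact eq_comm
  -- reformulate hypothesis (1) fiberwise
  have hmain : (∀ w : X ⊕ Z,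
        ∑ x ∈ univ.filter (fun x => corelComp α β w (Sum.inl x)), iX x =
          ∑ z ∈ univ.filter (fun z => corelComp α β w (Sum.inr z)), iZ z) ↔
      (∀ k, ∑ x ∈ univ.filter (fun x : X => cmap α β hα hβ (Sum.inl x) = k), iX x =
            ∑ z ∈ univ.filter (fun z : Z => cmap α β hα hβ (Sum.inr (Sum.inr z)) = k), iZ z) := by
    constructor
    · intro H k
      by_cases hx : ∃ x : X, cmap α β hα hβ (Sum.inl x) = k
      · obtain ⟨x₀, hx₀⟩ := hx
        have h := H (Sum.inl x₀)
        rw [hfX (Sum.inl x₀), hfZ (Sum.inl x₀)] at h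
        exact (sum_filter_ext (fun x => by simp only [Sum.map_inl, id_eq, hx₀]) iX).trans
          (h.trans (sum_filter_ext (fun z => by simp only [Sum.map_inl, id_eq, hx₀]) iZ))
      · by_cases hz : ∃ z : Z, cmap α β hα hβ (Sum.inr (Sum.inr z)) = k
        · obtain ⟨z₀, hz₀⟩ := hz
          have h := H (Sum.inr z₀)
          rw [hfX (Sum.inr z₀), hfZ (Sum.inr z₀)] at h
          exact (sum_filter_ext (fun x => by simp only [Sum.map_inr, id_eq, hz₀]) iX).trans
            (h.trans (sum_filter_ext (fun z => by simp only [Sum.map_inr, id_eq, hz₀]) iZ))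
        · push_neg at hx hz
          rw [Finset.filter_false_of_mem (fun x _ => hx x),
            Finset.filter_false_of_mem (fun z _ => hz z)]
          simp
    · intro H w
      rw [hfX w, hfZ w]
      exact H (cmap α β hα hβ (Sum.map id Sum.inr w))
  rw [hmain]
  constructor
  · -- hard direction: construct iY
    intro Hk
    obtain ⟨a, ha⟩ := exists_spread α hα iX
    have hβ' : Equivalence (fun u v : Z ⊕ Y => β u.swap v.swap) :=
      ⟨fun u => hβ.refl _, fun h => hβ.symm h, fun h1 h2 => hβ.trans h1 h2⟩
    obtain ⟨b, hb0⟩ := exists_spread (fun u v : Z ⊕ Y => β u.swap v.swap) hβ' iZ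
    have hb : ∀ y : Y, ∑ y' ∈ univ.filter (fun y' => β (Sum.inl y) (Sum.inl y')), b y' =
        ∑ z ∈ univ.filter (fun z => β (Sum.inl y) (Sum.inr z)), iZ z := by
      intro y
      have h := hb0 y
      simp only [Sum.swap_inl, Sum.swap_inr] at h
      exact (sum_filter_ext (fun _ => Iff.rfl) b).trans (h.trans (sum_filter_ext (fun _ => Iff.rfl) iZ))
    -- pure classes have zero sums
    have hpureX : ∀ x₀ : X, (¬ ∃ y, α (Sum.inl x₀) (Sum.inr y)) →
        ∑ x ∈ univ.filter (fun x => α (Sum.inl x₀) (Sum.inl x)), iX x = 0 := by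
      intro x₀ hx₀
      have h1 : cmap α β hα hβ (Sum.inl x₀) =
          Sum.inr (Sum.inl (Quotient.mk (sA α hα) (Sum.inl x₀))) := cmap_X_none α β hα hβ hx₀
      have hxf : univ.filter (fun x => α (Sum.inl x₀) (Sum.inl x)) =
          univ.filter (fun x : X => cmap α β hα hβ (Sum.inl x) = cmap α β hα hβ (Sum.inl x₀)) := by
        apply Finset.filter_congr
        intro x _
        constructor
        · intro hrel
          exact ((sim_iff α β hα hβ _ _).1 (simα α β hrel)).symm
        · intro hcx
          by_cases hx : ∃ y, α (Sum.inl x) (Sum.inr y)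
          · rw [cmap_X_of α β hα hβ hx.choose_spec, h1] at hcx
            exact absurd hcx (by simp)
          · rw [cmap_X_none α β hα hβ hx, h1] at hcx
            simp only [Sum.inr.injEq, Sum.inl.injEq] at hcx
            exact hα.symm (Quotient.exact hcx)
      have hzf : univ.filter (fun z : Z =>
          cmap α β hα hβ (Sum.inr (Sum.inr z)) = cmap α β hα hβ (Sum.inl x₀)) = ∅ := by
        rw [Finset.filter_eq_empty_iff]
        intro z _
        rw [h1]
        by_cases hz : ∃ y, β (Sum.inl y) (Sum.inr z)
        · rw [cmap_Z_of α β hα hβ hz.choose_spec]; simp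
        · rw [cmap_Z_none α β hα hβ hz]; simp
      rw [hxf, Hk (cmap α β hα hβ (Sum.inl x₀)), hzf, Finset.sum_empty]
    have hpureZ : ∀ z₀ : Z, (¬ ∃ y, β (Sum.inl y) (Sum.inr z₀)) →
        ∑ z ∈ univ.filter (fun z => β (Sum.inr z₀) (Sum.inr z)), iZ z = 0 := by
      intro z₀ hz₀
      have h1 : cmap α β hα hβ (Sum.inr (Sum.inr z₀)) =
          Sum.inr (Sum.inr (Quotient.mk (sB β hβ) (Sum.inr z₀))) := cmap_Z_none α β hα hβ hz₀
      have hzf : univ.filter (fun z => β (Sum.inr z₀) (Sum.inr z)) =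
          univ.filter (fun z : Z =>
            cmap α β hα hβ (Sum.inr (Sum.inr z)) = cmap α β hα hβ (Sum.inr (Sum.inr z₀))) := by
        apply Finset.filter_congr
        intro z _
        constructor
        · intro hrel
          exact ((sim_iff α β hα hβ _ _).1 (simβ α β hrel)).symm
        · intro hcz
          by_cases hz : ∃ y, β (Sum.inl y) (Sum.inr z)
          · rw [cmap_Z_of α β hα hβ hz.choose_spec, h1] at hcz
            exact absurd hcz (by simp)
          · rw [cmap_Z_none α β hα hβ hz, h1] at hcz
            simp only [Sum.inr.injEq] at hcz
            exact hβ.symm (Quotient.exact hcz)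
      have hxf : univ.filter (fun x : X =>
          cmap α β hα hβ (Sum.inl x) = cmap α β hα hβ (Sum.inr (Sum.inr z₀))) = ∅ := by
        rw [Finset.filter_eq_empty_iff]
        intro x _
        rw [h1]
        by_cases hx : ∃ y, α (Sum.inl x) (Sum.inr y)
        · rw [cmap_X_of α β hα hβ hx.choose_spec]; simp
        · rw [cmap_X_none α β hα hβ hx]; simp
      rw [hzf, ← Hk (cmap α β hα hβ (Sum.inr (Sum.inr z₀))), hxf, Finset.sum_empty]
    -- per-class balance of (iX, a) on α
    have hbalα : ∀ u : X ⊕ Y,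
        ∑ x ∈ univ.filter (fun x => α u (Sum.inl x)), iX x =
        ∑ y ∈ univ.filter (fun y => α u (Sum.inr y)), a y := by
      intro u
      by_cases hu : ∃ y₀, α u (Sum.inr y₀)
      · obtain ⟨y₀, hy₀⟩ := hu
        have h1 : univ.filter (fun x => α u (Sum.inl x)) =
            univ.filter (fun x => α (Sum.inr y₀) (Sum.inl x)) :=
          Finset.filter_congr fun x _ =>
            ⟨fun h => hα.trans (hα.symm hy₀) h, fun h => hα.trans hy₀ h⟩
        have h2 : univ.filter (fun y => α u (Sum.inr y)) =
            univ.filter (fun y => α (Sum.inr y₀) (Sum.inr y)) :=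
          Finset.filter_congr fun y _ =>
            ⟨fun h => hα.trans (hα.symm hy₀) h, fun h => hα.trans hy₀ h⟩
        rw [h1, h2]
        exact (ha y₀).symm
      · rcases u with x₀ | y₀
        · have h2 : univ.filter (fun y => α (Sum.inl x₀) (Sum.inr y)) = ∅ := by
            rw [Finset.filter_eq_empty_iff]
            intro y _ hy
            exact hu ⟨y, hy⟩
          rw [h2, Finset.sum_empty]
          exact hpureX x₀ hu
        · exact absurd ⟨y₀, hα.refl _⟩ hu
    -- per-class balance of (b, iZ) on β
    have hbalβ : ∀ u : Y ⊕ Z,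
        ∑ y ∈ univ.filter (fun y => β u (Sum.inl y)), b y =
        ∑ z ∈ univ.filter (fun z => β u (Sum.inr z)), iZ z := by
      intro u
      by_cases hu : ∃ y₀, β u (Sum.inl y₀)
      · obtain ⟨y₀, hy₀⟩ := hu
        have h1 : univ.filter (fun y => β u (Sum.inl y)) =
            univ.filter (fun y => β (Sum.inl y₀) (Sum.inl y)) :=
          Finset.filter_congr fun y _ =>
            ⟨fun h => hβ.trans (hβ.symm hy₀) h, fun h => hβ.trans hy₀ h⟩
        have h2 : univ.filter (fun z => β u (Sum.inr z)) =
            univ.filter (fun z => β (Sum.inl y₀) (Sum.inr z)) :=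
          Finset.filter_congr fun z _ =>
            ⟨fun h => hβ.trans (hβ.symm hy₀) h, fun h => hβ.trans hy₀ h⟩
        rw [h1, h2]
        exact hb y₀
      · rcases u with y₀ | z₀
        · exact absurd ⟨y₀, hβ.refl _⟩ hu
        · have h1 : univ.filter (fun y => β (Sum.inr z₀) (Sum.inl y)) = ∅ := by
            rw [Finset.filter_eq_empty_iff]
            intro y _ hy
            exact hu ⟨y, hy⟩
          rw [h1, Finset.sum_empty]
          have hz₀ : ¬ ∃ y, β (Sum.inl y) (Sum.inr z₀) := by
            rintro ⟨y, hy⟩; exact hu ⟨y, hβ.symm hy⟩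
          exact (hpureZ z₀ hz₀).symm
    -- fiberwise versions
    have HA : ∀ k, ∑ x ∈ univ.filter (fun x : X => cmap α β hα hβ (Sum.inl x) = k), iX x =
        ∑ y ∈ univ.filter (fun y : Y => cmap α β hα hβ (Sum.inr (Sum.inl y)) = k), a y := by
      intro k
      have hbal' : ∀ u : X ⊕ Y,
          ∑ v ∈ univ.filter (α u), Sum.elim iX (fun _ => (0 : F)) v =
          ∑ v ∈ univ.filter (α u), Sum.elim (fun _ => (0 : F)) a v := by
        intro u
        rw [sum_filter_sumtype, sum_filter_sumtype]
        simp only [Finset.sum_const_zero, add_zero, zero_add]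
        exact hbalα u
      have h := regroup α hα (fun u => cmap α β hα hβ (Sum.map id Sum.inl u))
        (fun u v huv => (sim_iff α β hα hβ _ _).1 (simα α β huv)) _ _ hbal' k
      rw [sum_filter_sumtype, sum_filter_sumtype] at h
      simp only [Finset.sum_const_zero, add_zero, zero_add] at h
      exact (sum_filter_ext (fun x => by simp) iX).trans
        (h.trans (sum_filter_ext (fun y => by simp) a))
    have HB : ∀ k, ∑ y ∈ univ.filter (fun y : Y => cmap α β hα hβ (Sum.inr (Sum.inl y)) = k), b y =
        ∑ z ∈ univ.filter (fun z : Z => cmap α β hα hβ (Sum.inr (Sum.inr z)) = k), iZ z := by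
      intro k
      have hbal' : ∀ u : Y ⊕ Z,
          ∑ v ∈ univ.filter (β u), Sum.elim b (fun _ => (0 : F)) v =
          ∑ v ∈ univ.filter (β u), Sum.elim (fun _ => (0 : F)) iZ v := by
        intro u
        rw [sum_filter_sumtype, sum_filter_sumtype]
        simp only [Finset.sum_const_zero, add_zero, zero_add]
        exact hbalβ u
      have h := regroup β hβ (fun u => cmap α β hα hβ (Sum.inr u))
        (fun u v huv => (sim_iff α β hα hβ _ _).1 (simβ α β huv)) _ _ hbal' k
      rw [sum_filter_sumtype, sum_filter_sumtype] at h
      simp only [Finset.sum_const_zero, add_zero, zero_add] at h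
      exact (sum_filter_ext (fun y => Iff.rfl) b).trans
        (h.trans (sum_filter_ext (fun z => Iff.rfl) iZ))
    -- apply the core feasibility lemma
    set p : Y → Y → Prop := fun y y' => α (Sum.inr y) (Sum.inr y') with hpdef
    set q : Y → Y → Prop := fun y y' => β (Sum.inl y) (Sum.inl y') with hqdef
    have hp : Equivalence p := ⟨fun y => hα.refl _, fun h => hα.symm h, fun h1 h2 => hα.trans h1 h2⟩
    have hq : Equivalence q := ⟨fun y => hβ.refl _, fun h => hβ.symm h, fun h1 h2 => hβ.trans h1 h2⟩
    have hjsymm : ∀ u v : Y, jRel α β u v → jRel α β v u :=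
      fun u v h => h.imp hα.symm hβ.symm
    have hRTGc : ∀ y y' : Y, Relation.ReflTransGen (rbase p q univ) y y' ↔
        cmap α β hα hβ (Sum.inr (Sum.inl y')) = cmap α β hα hβ (Sum.inr (Sum.inl y)) := by
      intro y y'
      have h1 : Relation.ReflTransGen (rbase p q univ) y y' ↔
          Relation.ReflTransGen (jRel α β) y y' :=
        ⟨fun hh => Relation.ReflTransGen.mono (r := rbase p q univ) (p := jRel α β) (fun u v h => h.2.2) _ _ hh,
         fun hh => Relation.ReflTransGen.mono (r := jRel α β) (p := rbase p q univ) (fun u v h => ⟨Finset.mem_univ u, Finset.mem_univ v, h⟩) _ _ hh⟩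
      rw [h1, ← eqvGen_iff_rtg hjsymm, cmap_LY, cmap_LY]
      constructor
      · intro h
        exact congrArg Sum.inl ((jquot α β).2 h).symm
      · intro h
        exact Relation.EqvGen.symm _ _ ((jquot α β).1 (Sum.inl.inj h))
    have hcore_bal : ∀ y ∈ (univ : Finset Y),
        ∑ y' ∈ univ.filter (fun y' => Relation.ReflTransGen (rbase p q univ) y y'), a y' =
        ∑ y' ∈ univ.filter (fun y' => Relation.ReflTransGen (rbase p q univ) y y'), b y' := by
      intro y _
      have hfeq : univ.filter (fun y' => Relation.ReflTransGen (rbase p q univ) y y') =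
          univ.filter (fun y' : Y => cmap α β hα hβ (Sum.inr (Sum.inl y')) =
            cmap α β hα hβ (Sum.inr (Sum.inl y))) :=
        Finset.filter_congr fun y' _ => hRTGc y y'
      rw [hfeq, ← HA _, Hk _, HB _]
    obtain ⟨iY, hiYp, hiYq⟩ := core_feasible p q hp hq univ a b hcore_bal
    have hfinalα : ∀ u : X ⊕ Y,
        ∑ y' ∈ univ.filter (fun y' => α u (Sum.inr y')), iY y' =
        ∑ y' ∈ univ.filter (fun y' => α u (Sum.inr y')), a y' := by
      intro u
      by_cases hu : ∃ y₀, α u (Sum.inr y₀)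
      · obtain ⟨y₀, hy₀⟩ := hu
        have hfe : univ.filter (fun y' => α u (Sum.inr y')) =
            univ.filter (fun y' => p y₀ y') :=
          Finset.filter_congr fun y' _ =>
            ⟨fun h => hα.trans (hα.symm hy₀) h, fun h => hα.trans hy₀ h⟩
        rw [hfe]
        exact hiYp y₀ (Finset.mem_univ _)
      · have hfe : univ.filter (fun y' => α u (Sum.inr y')) = ∅ := by
          rw [Finset.filter_eq_empty_iff]
          intro y' _ hy'
          exact hu ⟨y', hy'⟩
        rw [hfe]
        simp
    have hfinalβ : ∀ u : Y ⊕ Z,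
        ∑ y' ∈ univ.filter (fun y' => β u (Sum.inl y')), iY y' =
        ∑ y' ∈ univ.filter (fun y' => β u (Sum.inl y')), b y' := by
      intro u
      by_cases hu : ∃ y₀, β u (Sum.inl y₀)
      · obtain ⟨y₀, hy₀⟩ := hu
        have hfe : univ.filter (fun y' => β u (Sum.inl y')) =
            univ.filter (fun y' => q y₀ y') :=
          Finset.filter_congr fun y' _ =>
            ⟨fun h => hβ.trans (hβ.symm hy₀) h, fun h => hβ.trans hy₀ h⟩
        rw [hfe]
        exact hiYq y₀ (Finset.mem_univ _)
      · have hfe : univ.filter (fun y' => β u (Sum.inl y')) = ∅ := by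
          rw [Finset.filter_eq_empty_iff]
          intro y' _ hy'
          exact hu ⟨y', hy'⟩
        rw [hfe]
        simp
    refine ⟨iY, fun w => ?_, fun w => ?_⟩
    · rw [hbalα w, hfinalα w]
    · rw [hfinalβ w]
      exact hbalβ w
  · -- easy direction
    rintro ⟨iY, h2a, h2b⟩ k
    have hbalA : ∀ u : X ⊕ Y,
        ∑ v ∈ univ.filter (α u), Sum.elim iX (fun _ => (0 : F)) v =
        ∑ v ∈ univ.filter (α u), Sum.elim (fun _ => (0 : F)) iY v := by
      intro u
      rw [sum_filter_sumtype, sum_filter_sumtype]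
      simp only [Finset.sum_const_zero, add_zero, zero_add]
      exact h2a u
    have hA := regroup α hα (fun u => cmap α β hα hβ (Sum.map id Sum.inl u))
      (fun u v huv => (sim_iff α β hα hβ _ _).1 (simα α β huv)) _ _ hbalA k
    rw [sum_filter_sumtype, sum_filter_sumtype] at hA
    simp only [Finset.sum_const_zero, add_zero, zero_add] at hA
    have hbalB : ∀ u : Y ⊕ Z,
        ∑ v ∈ univ.filter (β u), Sum.elim iY (fun _ => (0 : F)) v =
        ∑ v ∈ univ.filter (β u), Sum.elim (fun _ => (0 : F)) iZ v := by
      intro u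
      rw [sum_filter_sumtype, sum_filter_sumtype]
      simp only [Finset.sum_const_zero, add_zero, zero_add]
      exact h2b u
    have hB := regroup β hβ (fun u => cmap α β hα hβ (Sum.inr u))
      (fun u v huv => (sim_iff α β hα hβ _ _).1 (simβ α β huv)) _ _ hbalB k
    rw [sum_filter_sumtype, sum_filter_sumtype] at hB
    simp only [Finset.sum_const_zero, add_zero, zero_add] at hB
    refine (sum_filter_ext (fun x => by simp) iX).trans
      (hA.trans ((sum_filter_ext (fun y => by simp) iY).trans
        (hB.trans (sum_filter_ext (fun z => Iff.rfl) iZ))))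

end Main

/-- Compositionality of the current functor `I`: the currents
`(i_X, i_Z)` are balanced on each equivalence class of the composite corelation `β∘α`
(the sum over the `X`-part of each class equals the sum over its `Z`-part) if and only
if there exists `i_Y` balanced with `i_X` on each class of `α` and with `i_Z` on each
class of `β`. -/
theorem statement18 {F : Type*} [Field F] {X Y Z : Type*}
    [Fintype X] [Fintype Y] [Fintype Z]
    (α : X ⊕ Y → X ⊕ Y → Prop) (hα : Equivalence α)
    (β : Y ⊕ Z → Y ⊕ Z → Prop) (hβ : Equivalence β)
    (iX : X → F) (iZ : Z → F) :
    (∀ w : X ⊕ Z,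
        ∑ x ∈ univ.filter (fun x => corelComp α β w (Sum.inl x)), iX x =
          ∑ z ∈ univ.filter (fun z => corelComp α β w (Sum.inr z)), iZ z) ↔
      ∃ iY : Y → F,
        (∀ w : X ⊕ Y,
          ∑ x ∈ univ.filter (fun x => α w (Sum.inl x)), iX x =
            ∑ y ∈ univ.filter (fun y => α w (Sum.inr y)), iY y) ∧
        ∀ w : Y ⊕ Z,
          ∑ y ∈ univ.filter (fun y => β w (Sum.inl y)), iY y =
            ∑ z ∈ univ.filter (fun z => β w (Sum.inr z)), iZ z :=
  statement18' α hα β hβ iX iZ
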